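/- Let H be a complex Hilbert space, β > 0, and let ε be a bounded selfadjoint operator on H with spectrum contained in [m, ∞) for some m > 0. For s ∈ [0, β] define the bounded operator F(s) = f_s(ε) by the continuous functional calculus, where f_s(x) = (exp(−sx) + exp((s−β)x)) / (2x(1 − exp(−βx))), and define g(ε) by g(x) = (2x(1 − exp(−βx)))⁻¹. Then for every continuous function u : [0, β/2] → H, setting u₀ = ∫₀^{β/2} exp(−σε)u(σ) dσ and u_β = ∫₀^{β/2} exp((σ − β/2)ε)u(σ) dσ (Bochner integrals, with exp(−tε) defined by the functional calculus), one has ∫₀^{β/2} ∫₀^{β/2} ⟨u(σ), F(σ + τ)u(τ)⟩ dτ dσ = ⟨u₀, g(ε)u₀⟩ + ⟨u_β, g(ε)u_β⟩, and in particular this double integral is a nonnegative real number. -/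

import Mathlib

open MeasureTheory intervalIntegral
open scoped InnerProductSpace

noncomputable def expOp {H : Type*} [NormedAddCommGroup H] [InnerProductSpace ℂ H]
    [CompleteSpace H] (ε : H →L[ℂ] H) (σ : ℝ) : H →L[ℂ] H :=
  cfc (fun x : ℝ => Real.exp (-σ * x)) ε

lemma expOp_continuous {H : Type*} [NormedAddCommGroup H] [InnerProductSpace ℂ H]
    [CompleteSpace H] (ε : H →L[ℂ] H) (hε : IsSelfAdjoint ε) :
    Continuous (expOp ε) := by
  have hΦ : Continuous fun σ : ℝ =>
      (ContinuousMap.curry ⟨fun p : ℝ × spectrum ℝ ε => Real.exp (-p.1 * (p.2 : ℝ)), by fun_prop⟩) σ :=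
    ContinuousMap.continuous _
  have : expOp ε = fun σ : ℝ => cfcHom hε (R := ℝ)
      ((ContinuousMap.curry ⟨fun p : ℝ × spectrum ℝ ε => Real.exp (-p.1 * (p.2 : ℝ)), by fun_prop⟩) σ) := by
    funext σ
    rw [expOp, cfc_apply (fun x : ℝ => Real.exp (-σ * x)) ε hε (by fun_prop)]
    congr 1
  rw [this]
  exact (cfcHom_isClosedEmbedding hε).continuous.comp hΦ

lemma inner_int_right {H : Type*} [NormedAddCommGroup H] [InnerProductSpace ℂ H]
    [CompleteSpace H] {c : ℝ} (T : H →L[ℂ] H) {v : ℝ → H}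
    (hv : IntegrableOn v (Set.Ioc 0 c) volume) (x : H) :
    ∫ τ in Set.Ioc (0:ℝ) c, ⟪x, T (v τ)⟫_ℂ = ⟪x, T (∫ τ in Set.Ioc (0:ℝ) c, v τ)⟫_ℂ :=
  ((innerSL ℂ x).comp T).integral_comp_comm hv

lemma inner_int_left {H : Type*} [NormedAddCommGroup H] [InnerProductSpace ℂ H]
    [CompleteSpace H] {c : ℝ} {v : ℝ → H}
    (hv : IntegrableOn v (Set.Ioc 0 c) volume) (y : H) :
    ∫ σ in Set.Ioc (0:ℝ) c, ⟪v σ, y⟫_ℂ = ⟪∫ σ in Set.Ioc (0:ℝ) c, v σ, y⟫_ℂ := by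
  have h1 : ∀ σ, ⟪v σ, y⟫_ℂ = (starRingEnd ℂ) ⟪y, v σ⟫_ℂ := fun σ => (inner_conj_symm _ _).symm
  simp_rw [h1]
  rw [integral_conj]
  have h2 : (∫ (x : ℝ) in Set.Ioc 0 c, ⟪y, v x⟫_ℂ) = ⟪y, ∫ σ in Set.Ioc (0:ℝ) c, v σ⟫_ℂ :=
    (innerSL ℂ y).integral_comp_comm hv
  rw [h2]
  exact inner_conj_symm _ _


/-- reflection positivity at the operator level. For a bounded selfadjoint
operator `ε` on a complex Hilbert space with spectrum in `[m, ∞)`, `m > 0`, with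
`F(s) = f_s(ε)` for `f_s(x) = (e^{−sx} + e^{(s−β)x})/(2x(1 − e^{−βx}))` and
`g(x) = (2x(1 − e^{−βx}))⁻¹` given by the continuous functional calculus, for every continuous
`u : [0, β/2] → H` one has, with `u₀ = ∫₀^{β/2} e^{−σε} u(σ) dσ` and
`u_β = ∫₀^{β/2} e^{(σ−β/2)ε} u(σ) dσ`:
`∫₀^{β/2}∫₀^{β/2} ⟨u(σ), F(σ+τ) u(τ)⟩ dτ dσ = ⟨u₀, g(ε) u₀⟩ + ⟨u_β, g(ε) u_β⟩ ≥ 0`. -/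
theorem stmt12 {H : Type*} [NormedAddCommGroup H] [InnerProductSpace ℂ H] [CompleteSpace H]
    (β m : ℝ) (hβ : 0 < β) (hm : 0 < m)
    (ε : H →L[ℂ] H) (hε : IsSelfAdjoint ε) (hspec : spectrum ℝ ε ⊆ Set.Ici m)
    (F : ℝ → H →L[ℂ] H)
    (hFdef : ∀ s ∈ Set.Icc (0:ℝ) β,
      F s = cfc (fun x : ℝ =>
        (Real.exp (-s * x) + Real.exp ((s - β) * x)) / (2 * x * (1 - Real.exp (-β * x)))) ε)
    (g : H →L[ℂ] H)
    (hgdef : g = cfc (fun x : ℝ => (2 * x * (1 - Real.exp (-β * x)))⁻¹) ε)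
    (u : ℝ → H) (hu : ContinuousOn u (Set.Icc 0 (β / 2)))
    (u₀ uβ : H)
    (hu₀ : u₀ = ∫ σ in (0:ℝ)..β / 2, (cfc (fun x : ℝ => Real.exp (-σ * x)) ε) (u σ))
    (huβ : uβ = ∫ σ in (0:ℝ)..β / 2, (cfc (fun x : ℝ => Real.exp ((σ - β / 2) * x)) ε) (u σ)) :
    (∫ σ in (0:ℝ)..β / 2, ∫ τ in (0:ℝ)..β / 2, ⟪u σ, F (σ + τ) (u τ)⟫_ℂ) =
      ⟪u₀, g u₀⟫_ℂ + ⟪uβ, g uβ⟫_ℂ ∧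
    ∃ r : ℝ, 0 ≤ r ∧
      (∫ σ in (0:ℝ)..β / 2, ∫ τ in (0:ℝ)..β / 2, ⟪u σ, F (σ + τ) (u τ)⟫_ℂ) = (r : ℂ) := by
  have hc : (0:ℝ) ≤ β / 2 := by linarith
  have hd : ∀ x ∈ spectrum ℝ ε, 0 < 2 * x * (1 - Real.exp (-β * x)) := by
    intro x hx
    have hxm : m ≤ x := hspec hx
    have hx0 : 0 < x := lt_of_lt_of_le hm hxm
    have he : Real.exp (-β * x) < 1 := by
      rw [Real.exp_lt_one_iff]; nlinarith
    nlinarith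
  have hgc : ContinuousOn (fun x : ℝ => (2 * x * (1 - Real.exp (-β * x)))⁻¹) (spectrum ℝ ε) :=
    ContinuousOn.inv₀ (by fun_prop) (fun x hx => (hd x hx).ne')
  -- pointwise operator identity
  have hFeq : ∀ σ ∈ Set.Icc (0:ℝ) (β/2), ∀ τ ∈ Set.Icc (0:ℝ) (β/2),
      F (σ + τ) = expOp ε σ * (g * expOp ε τ)
        + expOp ε (β/2 - σ) * (g * expOp ε (β/2 - τ)) := by
    intro σ hσ τ hτ
    obtain ⟨hσ0, hσ1⟩ := hσ; obtain ⟨hτ0, hτ1⟩ := hτ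
    have e1 : expOp ε σ * (g * expOp ε τ)
        = cfc (fun x : ℝ => Real.exp (-σ*x) *
            ((2*x*(1 - Real.exp (-β*x)))⁻¹ * Real.exp (-τ*x))) ε := by
      rw [hgdef, expOp, expOp, ← cfc_mul _ _ ε hgc (by fun_prop),
          ← cfc_mul (fun x : ℝ => Real.exp (-σ*x)) (fun x : ℝ => (2*x*(1 - Real.exp (-β*x)))⁻¹ * Real.exp (-τ*x)) ε (by fun_prop) (hgc.mul (by fun_prop))]
    have e2 : expOp ε (β/2-σ) * (g * expOp ε (β/2-τ))
        = cfc (fun x : ℝ => Real.exp (-(β/2-σ)*x) *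
            ((2*x*(1 - Real.exp (-β*x)))⁻¹ * Real.exp (-(β/2-τ)*x))) ε := by
      rw [hgdef, expOp, expOp, ← cfc_mul _ _ ε hgc (by fun_prop),
          ← cfc_mul (fun x : ℝ => Real.exp (-(β/2-σ)*x)) (fun x : ℝ => (2*x*(1 - Real.exp (-β*x)))⁻¹ * Real.exp (-(β/2-τ)*x)) ε (by fun_prop) (hgc.mul (by fun_prop))]
    have hc1 : ContinuousOn (fun x : ℝ => Real.exp (-σ*x) *
        ((2*x*(1 - Real.exp (-β*x)))⁻¹ * Real.exp (-τ*x))) (spectrum ℝ ε) :=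
      (by fun_prop : ContinuousOn (fun x : ℝ => Real.exp (-σ*x)) (spectrum ℝ ε)).mul
        (hgc.mul (by fun_prop : ContinuousOn (fun x : ℝ => Real.exp (-τ*x)) (spectrum ℝ ε)))
    have hc2 : ContinuousOn (fun x : ℝ => Real.exp (-(β/2-σ)*x) *
        ((2*x*(1 - Real.exp (-β*x)))⁻¹ * Real.exp (-(β/2-τ)*x))) (spectrum ℝ ε) :=
      (by fun_prop : ContinuousOn (fun x : ℝ => Real.exp (-(β/2-σ)*x)) (spectrum ℝ ε)).mul
        (hgc.mul (by fun_prop : ContinuousOn (fun x : ℝ => Real.exp (-(β/2-τ)*x)) (spectrum ℝ ε)))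
    have e3 := cfc_add (a := ε) _ _ hc1 hc2
    rw [hFdef (σ + τ) ⟨by linarith, by linarith⟩, e1, e2, ← e3]
    apply cfc_congr
    intro x hx
    dsimp only
    rw [div_eq_mul_inv,
      show Real.exp (-(σ + τ) * x) = Real.exp (-σ*x) * Real.exp (-τ*x) by
        rw [← Real.exp_add]; congr 1; ring,
      show Real.exp ((σ + τ - β) * x) = Real.exp (-(β/2-σ)*x) * Real.exp (-(β/2-τ)*x) by
        rw [← Real.exp_add]; congr 1; ring]
    ring
  -- integrands
  have hsym : ∀ (σ : ℝ) (x y : H), ⟪(expOp ε σ) x, y⟫_ℂ = ⟪x, (expOp ε σ) y⟫_ℂ := fun σ x y =>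
    (cfc_predicate (R := ℝ) (fun t : ℝ => Real.exp (-σ * t)) ε :
      IsSelfAdjoint (expOp ε σ)).isSymmetric x y
  have hvcont : ContinuousOn (fun σ => expOp ε σ (u σ)) (Set.Icc 0 (β/2)) :=
    ContinuousOn.clm_apply ((expOp_continuous ε hε).continuousOn) hu
  have hwcont : ContinuousOn (fun σ => expOp ε (β/2 - σ) (u σ)) (Set.Icc 0 (β/2)) :=
    ContinuousOn.clm_apply (((expOp_continuous ε hε).comp
      (continuous_const.sub continuous_id)).continuousOn) hu
  have hvint : IntegrableOn (fun σ => expOp ε σ (u σ)) (Set.Ioc 0 (β/2)) volume :=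
    (hvcont.integrableOn_Icc).mono_set Set.Ioc_subset_Icc_self
  have hwint : IntegrableOn (fun σ => expOp ε (β/2 - σ) (u σ)) (Set.Ioc 0 (β/2)) volume :=
    (hwcont.integrableOn_Icc).mono_set Set.Ioc_subset_Icc_self
  have hu₀' : u₀ = ∫ σ in Set.Ioc (0:ℝ) (β/2), expOp ε σ (u σ) := by
    rw [hu₀, intervalIntegral.integral_of_le hc]; rfl
  have huβ' : uβ = ∫ σ in Set.Ioc (0:ℝ) (β/2), expOp ε (β/2 - σ) (u σ) := by
    rw [huβ, intervalIntegral.integral_of_le hc]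
    apply setIntegral_congr_fun measurableSet_Ioc
    intro σ _
    simp only [expOp, neg_sub]
  have key : (∫ σ in (0:ℝ)..β/2, ∫ τ in (0:ℝ)..β/2, ⟪u σ, F (σ+τ) (u τ)⟫_ℂ)
      = ⟪u₀, g u₀⟫_ℂ + ⟪uβ, g uβ⟫_ℂ := by
    rw [intervalIntegral.integral_of_le hc]
    have inner_eq : ∀ σ ∈ Set.Ioc (0:ℝ) (β/2),
        (∫ τ in (0:ℝ)..β/2, ⟪u σ, F (σ+τ) (u τ)⟫_ℂ)
        = ⟪expOp ε σ (u σ), g u₀⟫_ℂ + ⟪expOp ε (β/2-σ) (u σ), g uβ⟫_ℂ := by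
      intro σ hσ
      have hσ' : σ ∈ Set.Icc (0:ℝ) (β/2) := Set.Ioc_subset_Icc_self hσ
      rw [intervalIntegral.integral_of_le hc]
      rw [setIntegral_congr_fun (g := fun τ =>
          ⟪expOp ε σ (u σ), g (expOp ε τ (u τ))⟫_ℂ
          + ⟪expOp ε (β/2-σ) (u σ), g (expOp ε (β/2-τ) (u τ))⟫_ℂ) measurableSet_Ioc ?_]
      · have j1 : IntegrableOn (fun τ => ⟪expOp ε σ (u σ), g (expOp ε τ (u τ))⟫_ℂ)
            (Set.Ioc 0 (β/2)) volume :=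
          ((continuousOn_const.inner (g.continuous.comp_continuousOn hvcont)).integrableOn_Icc).mono_set
            Set.Ioc_subset_Icc_self
        have j2 : IntegrableOn (fun τ => ⟪expOp ε (β/2-σ) (u σ), g (expOp ε (β/2-τ) (u τ))⟫_ℂ)
            (Set.Ioc 0 (β/2)) volume :=
          ((continuousOn_const.inner (g.continuous.comp_continuousOn hwcont)).integrableOn_Icc).mono_set
            Set.Ioc_subset_Icc_self
        rw [integral_add j1 j2, inner_int_right g hvint, inner_int_right g hwint, ← hu₀', ← huβ']
      · intro τ hτ
        have hτ' : τ ∈ Set.Icc (0:ℝ) (β/2) := Set.Ioc_subset_Icc_self hτ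
        dsimp only
        rw [hFeq σ hσ' τ hτ']
        simp only [ContinuousLinearMap.add_apply, ContinuousLinearMap.mul_apply, inner_add_right]
        rw [← hsym σ, ← hsym (β/2 - σ)]
    rw [setIntegral_congr_fun measurableSet_Ioc inner_eq]
    have i1 : IntegrableOn (fun σ => ⟪expOp ε σ (u σ), g u₀⟫_ℂ) (Set.Ioc 0 (β/2)) volume :=
      ((hvcont.inner continuousOn_const).integrableOn_Icc).mono_set Set.Ioc_subset_Icc_self
    have i2 : IntegrableOn (fun σ => ⟪expOp ε (β/2-σ) (u σ), g uβ⟫_ℂ) (Set.Ioc 0 (β/2)) volume :=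
      ((hwcont.inner continuousOn_const).integrableOn_Icc).mono_set Set.Ioc_subset_Icc_self
    rw [integral_add i1 i2, inner_int_left hvint (g u₀), inner_int_left hwint (g uβ),
      ← hu₀', ← huβ']
  refine ⟨key, ?_⟩
  set sq : ℝ → ℝ := fun x => Real.sqrt ((2*x*(1 - Real.exp (-β*x)))⁻¹) with hsq
  have hsqc : ContinuousOn sq (spectrum ℝ ε) := Real.continuous_sqrt.comp_continuousOn hgc
  have hgSS : g = cfc sq ε * cfc sq ε := by
    rw [hgdef, ← cfc_mul sq sq ε hsqc hsqc]
    exact cfc_congr fun x hx => (Real.mul_self_sqrt (inv_nonneg.mpr (hd x hx).le)).symm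
  have hSsym : ∀ (x y : H), ⟪(cfc sq ε) x, y⟫_ℂ = ⟪x, (cfc sq ε) y⟫_ℂ := fun x y =>
    (cfc_predicate sq ε : IsSelfAdjoint _).isSymmetric x y
  have hval : ∀ z : H, ⟪z, g z⟫_ℂ = ((‖cfc sq ε z‖^2 : ℝ) : ℂ) := by
    intro z
    rw [hgSS, ContinuousLinearMap.mul_apply, ← hSsym, inner_self_eq_norm_sq_to_K]
    norm_cast
  refine ⟨‖cfc sq ε u₀‖^2 + ‖cfc sq ε uβ‖^2, by positivity, ?_⟩
  rw [key, hval u₀, hval uβ]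
  push_cast
  ring
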